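/- If m = k (in the graph setting: if the number of edges equals 2|V| − 2), then the two Kirchhoff–Symanzik matrices K and *K have the same characteristic polynomial, hence the same spectrum with multiplicities; being symmetric (diagonalizable), they are similar matrices. -/

import Mathlib

open Matrix

/-- Standard basis vector of `ℝⁿ` labeled by a cochord index `μ : Fin m`. -/
def eCo (m k : ℕ) (μ : Fin m) : (Fin m ⊕ Fin k) → ℝ := Pi.single (Sum.inl μ) 1

/-- Standard basis vector of `ℝⁿ` labeled by a chord index `α : Fin k`. -/
def eCh (m k : ℕ) (α : Fin k) : (Fin m ⊕ Fin k) → ℝ := Pi.single (Sum.inr α) 1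

/-- The cycle Kirchhoff–Symanzik matrix `K_{α,α'} = ⟨c_α, c_{α'}⟩`. -/
def cycKS (m k : ℕ) (ccy : Fin k → (Fin m ⊕ Fin k) → ℝ) : Matrix (Fin k) (Fin k) ℝ :=
  Matrix.of fun α α' => ccy α ⬝ᵥ ccy α'

/-- The cocycle Kirchhoff–Symanzik matrix `(*K)_{μ,μ'} = ⟨c_μ, c_{μ'}⟩`. -/
def cocKS (m k : ℕ) (cco : Fin m → (Fin m ⊕ Fin k) → ℝ) : Matrix (Fin m) (Fin m) ℝ :=
  Matrix.of fun μ μ' => cco μ ⬝ᵥ cco μ'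

/-- The superposition matrix `ω_{μ,α} = ⟨c_μ, e_α⟩`. -/
def supMat (m k : ℕ) (cco : Fin m → (Fin m ⊕ Fin k) → ℝ) : Matrix (Fin m) (Fin k) ℝ :=
  Matrix.of fun μ α => cco μ ⬝ᵥ eCh m k α

private lemma evalCharpoly {n : Type*} [Fintype n] [DecidableEq n] (M : Matrix n n ℝ) (r : ℝ) :
    M.charpoly.eval r = (r • (1 : Matrix n n ℝ) - M).det := by
  rw [Matrix.charpoly, ← Polynomial.coe_evalRingHom, RingHom.map_det]
  congr 1
  ext i j
  by_cases hij : i = j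
  · subst hij
    simp [Matrix.charmatrix_apply_eq, Matrix.sub_apply, Matrix.one_apply]
  · simp [Matrix.charmatrix_apply_ne _ _ _ hij, Matrix.sub_apply, Matrix.one_apply_ne hij]

private lemma charpoly_one_add_mul_comm {n : ℕ} (A B : Matrix (Fin n) (Fin n) ℝ) :
    (1 + A * B).charpoly = (1 + B * A).charpoly := by
  apply Polynomial.eq_of_infinite_eval_eq
  apply Set.Infinite.mono (s := ({(1 : ℝ)}ᶜ : Set ℝ))
  · intro r hr
    have hr' : r ≠ 1 := hr
    set s : ℝ := r - 1 with hs_def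
    have hs : s ≠ 0 := sub_ne_zero.mpr hr'
    have key : ∀ X Y : Matrix (Fin n) (Fin n) ℝ,
        r • (1 : Matrix (Fin n) (Fin n) ℝ) - (1 + X * Y)
          = s • ((1 : Matrix (Fin n) (Fin n) ℝ) + X * ((-s⁻¹) • Y)) := by
      intro X Y
      rw [Matrix.mul_smul, smul_add, smul_smul, mul_neg, mul_inv_cancel₀ hs, neg_smul, one_smul,
        hs_def, sub_smul, one_smul]
      abel
    show (1 + A * B).charpoly.eval r = (1 + B * A).charpoly.eval r
    rw [evalCharpoly, evalCharpoly, key A B, key B A, Matrix.det_smul, Matrix.det_smul,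
      Matrix.det_one_add_mul_comm, Matrix.smul_mul, ← Matrix.mul_smul]
  · exact Set.Finite.infinite_compl (Set.finite_singleton 1)

private lemma charpoly_conj {n : ℕ} (U M : Matrix (Fin n) (Fin n) ℝ)
    (h1 : U * star U = 1) :
    (U * M * star U).charpoly = M.charpoly := by
  apply Polynomial.funext; intro r
  rw [evalCharpoly, evalCharpoly]
  have e : r • (1 : Matrix (Fin n) (Fin n) ℝ) - U * M * star U
      = U * (r • (1 : Matrix (Fin n) (Fin n) ℝ) - M) * star U := by
    rw [Matrix.mul_sub, Matrix.sub_mul, Matrix.mul_smul, Matrix.mul_one, Matrix.smul_mul, h1]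
  have hdet : U.det * (star U).det = 1 := by rw [← Matrix.det_mul, h1, Matrix.det_one]
  rw [e, Matrix.det_mul, Matrix.det_mul, mul_right_comm, hdet, one_mul]

private lemma charpoly_diagonal {n : ℕ} (d : Fin n → ℝ) :
    (Matrix.diagonal d).charpoly = ∏ i, (Polynomial.X - Polynomial.C (d i)) := by
  apply Polynomial.funext; intro r
  rw [evalCharpoly]
  have e : r • (1 : Matrix (Fin n) (Fin n) ℝ) - Matrix.diagonal d
      = Matrix.diagonal (fun i => r - d i) := by
    ext i j
    by_cases hij : i = j <;>
      simp [Matrix.sub_apply, Matrix.diagonal_apply, Matrix.one_apply, hij]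
  rw [e, Matrix.det_diagonal]
  simp [Polynomial.eval_prod]

private lemma exists_perm_comp {n : ℕ} (a b : Fin n → ℝ)
    (hab : Multiset.map a Finset.univ.val = Multiset.map b Finset.univ.val) :
    ∃ σ : Equiv.Perm (Fin n), a ∘ σ = b := by
  have h3 : List.Perm (List.ofFn a) (List.ofFn b) := by
    rw [← Multiset.coe_eq_coe, ← Fin.univ_val_map, ← Fin.univ_val_map]
    exact hab
  have hperm : List.Perm (List.ofFn (a ∘ Tuple.sort a)) (List.ofFn (b ∘ Tuple.sort b)) :=
    ((Tuple.sort a).ofFn_comp_perm a).trans (h3.trans ((Tuple.sort b).ofFn_comp_perm b).symm)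
  have heq : a ∘ Tuple.sort a = b ∘ Tuple.sort b :=
    List.ofFn_injective (List.Perm.eq_of_sortedLE
      (Tuple.monotone_sort a).sortedLE_ofFn (Tuple.monotone_sort b).sortedLE_ofFn hperm)
  refine ⟨(Tuple.sort b).symm.trans (Tuple.sort a), ?_⟩
  funext x
  have := congrFun heq ((Tuple.sort b).symm x)
  simpa using this

private lemma multiset_eq_of_prod_X_sub_C {n : ℕ} (a b : Fin n → ℝ)
    (h : (∏ i, (Polynomial.X - Polynomial.C (a i))) = ∏ i, (Polynomial.X - Polynomial.C (b i))) :
    Multiset.map a Finset.univ.val = Multiset.map b Finset.univ.val := by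
  have ha := Polynomial.roots_multiset_prod_X_sub_C (Multiset.map a Finset.univ.val)
  have hb := Polynomial.roots_multiset_prod_X_sub_C (Multiset.map b Finset.univ.val)
  rw [← ha, ← hb]
  congr 1
  rw [Multiset.map_map, Multiset.map_map, ← Finset.prod_eq_multiset_prod,
    ← Finset.prod_eq_multiset_prod]
  exact h

private lemma similar_of_isHermitian_of_charpoly_eq {n : ℕ}
    (M N : Matrix (Fin n) (Fin n) ℝ) (hM : M.IsHermitian) (hN : N.IsHermitian)
    (hchar : M.charpoly = N.charpoly) :
    ∃ S : Matrix (Fin n) (Fin n) ℝ, IsUnit S.det ∧ M = S * N * S⁻¹ := by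
  classical
  set U₁ : Matrix (Fin n) (Fin n) ℝ := (hM.eigenvectorUnitary : Matrix (Fin n) (Fin n) ℝ) with hU₁def
  set U₂ : Matrix (Fin n) (Fin n) ℝ := (hN.eigenvectorUnitary : Matrix (Fin n) (Fin n) ℝ) with hU₂def
  set a : Fin n → ℝ := RCLike.ofReal ∘ hM.eigenvalues with ha_def
  set b : Fin n → ℝ := RCLike.ofReal ∘ hN.eigenvalues with hb_def
  have hU₁ : U₁ * star U₁ = 1 := Matrix.mem_unitaryGroup_iff.mp (hM.eigenvectorUnitary).2
  have hU₁' : star U₁ * U₁ = 1 := Matrix.mem_unitaryGroup_iff'.mp (hM.eigenvectorUnitary).2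
  have hU₂ : U₂ * star U₂ = 1 := Matrix.mem_unitaryGroup_iff.mp (hN.eigenvectorUnitary).2
  have hU₂' : star U₂ * U₂ = 1 := Matrix.mem_unitaryGroup_iff'.mp (hN.eigenvectorUnitary).2
  have hMspec : M = U₁ * Matrix.diagonal a * star U₁ := hM.spectral_theorem
  have hNspec : N = U₂ * Matrix.diagonal b * star U₂ := hN.spectral_theorem
  -- the eigenvalues agree up to permutation
  have hprods : (∏ i, (Polynomial.X - Polynomial.C (a i)))
      = ∏ i, (Polynomial.X - Polynomial.C (b i)) := by
    rw [← _root_.charpoly_diagonal a, ← _root_.charpoly_diagonal b,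
      ← charpoly_conj U₁ (Matrix.diagonal a) hU₁, ← charpoly_conj U₂ (Matrix.diagonal b) hU₂,
      ← hMspec, ← hNspec]
    exact hchar
  obtain ⟨σ, hσ⟩ := exists_perm_comp a b (multiset_eq_of_prod_X_sub_C a b hprods)
  -- the permutation matrix
  set P : Matrix (Fin n) (Fin n) ℝ := (σ⁻¹ : Equiv.Perm (Fin n)).permMatrix ℝ with hPdef
  have hPkey : Matrix.diagonal a * P = P * Matrix.diagonal b := by
    have hsymm : (σ⁻¹ : Equiv.Perm (Fin n)).toPEquiv.symm = (σ : Equiv.Perm (Fin n)).toPEquiv := by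
      rw [← Equiv.toPEquiv_symm]; rfl
    ext i j
    rw [hPdef, Equiv.Perm.permMatrix, PEquiv.mul_toMatrix_apply, PEquiv.toMatrix_mul_apply, hsymm]
    simp only [Equiv.toPEquiv_apply]
    show Matrix.diagonal a i (σ j) = Matrix.diagonal b (σ⁻¹ i) j
    by_cases hij : i = σ j
    · rw [hij, (Equiv.Perm.inv_eq_iff_eq.mpr rfl : σ⁻¹ (σ j) = j)]
      simp [Matrix.diagonal_apply, ← hσ]
    · rw [Matrix.diagonal_apply_ne _ hij, Matrix.diagonal_apply_ne _ (fun hc => hij ?_)]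
      rw [← hc, (Equiv.Perm.eq_inv_iff_eq.mp rfl : σ (σ⁻¹ i) = i)]
  have hPunit : IsUnit P.det := by
    have : P * ((σ : Equiv.Perm (Fin n)).permMatrix ℝ) = 1 := by
      rw [hPdef, Equiv.Perm.permMatrix, Equiv.Perm.permMatrix, ← PEquiv.toMatrix_trans,
        ← Equiv.toPEquiv_trans]
      have : ((σ⁻¹ : Equiv.Perm (Fin n)).trans σ) = Equiv.refl (Fin n) := by
        ext x; simp
      rw [this, Equiv.toPEquiv_refl, PEquiv.toMatrix_refl]
    exact IsUnit.of_mul_eq_one _ (by rw [← Matrix.det_mul, this, Matrix.det_one])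
  have hU₁unit : IsUnit U₁.det :=
    IsUnit.of_mul_eq_one _ (by rw [← Matrix.det_mul, hU₁, Matrix.det_one])
  have hU₂sunit : IsUnit (star U₂).det :=
    IsUnit.of_mul_eq_one _ (by rw [← Matrix.det_mul, hU₂', Matrix.det_one])
  refine ⟨U₁ * P * star U₂, ?_, ?_⟩
  · rw [Matrix.det_mul, Matrix.det_mul]
    exact (hU₁unit.mul hPunit).mul hU₂sunit
  · have hMS : M * (U₁ * P * star U₂) = (U₁ * P * star U₂) * N := by
      rw [hMspec, hNspec]
      calc (U₁ * Matrix.diagonal a * star U₁) * (U₁ * P * star U₂)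
          = U₁ * Matrix.diagonal a * (star U₁ * U₁) * P * star U₂ := by
            simp only [Matrix.mul_assoc]
        _ = U₁ * (Matrix.diagonal a * P) * star U₂ := by
            rw [hU₁']; simp only [Matrix.mul_one, Matrix.mul_assoc]
        _ = U₁ * (P * Matrix.diagonal b) * star U₂ := by rw [hPkey]
        _ = U₁ * P * (star U₂ * U₂) * Matrix.diagonal b * star U₂ := by
            rw [hU₂']; simp only [Matrix.mul_one, Matrix.mul_assoc]
        _ = (U₁ * P * star U₂) * (U₂ * Matrix.diagonal b * star U₂) := by
            simp only [Matrix.mul_assoc]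
    have hSunit : IsUnit (U₁ * P * star U₂).det := by
      rw [Matrix.det_mul, Matrix.det_mul]
      exact (hU₁unit.mul hPunit).mul hU₂sunit
    rw [← hMS, Matrix.mul_assoc, Matrix.mul_nonsing_inv _ hSunit, Matrix.mul_one]

/-- If `m = k` then `K` and `*K` have the same characteristic polynomial (hence the same
spectrum with multiplicities) and, being diagonalizable, they are similar matrices. -/
theorem statement19 (m k : ℕ)
    (ccy : Fin k → (Fin m ⊕ Fin k) → ℝ) (cco : Fin m → (Fin m ⊕ Fin k) → ℝ)
    (hch : ∀ α α' : Fin k, eCh m k α ⬝ᵥ ccy α' = if α = α' then 1 else 0)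
    (hco : ∀ μ μ' : Fin m, eCo m k μ ⬝ᵥ cco μ' = if μ = μ' then 1 else 0)
    (hcc : ∀ (α : Fin k) (μ : Fin m), ccy α ⬝ᵥ cco μ = 0)
    (h : m = k) :
    (cocKS m k cco).charpoly = (cycKS m k ccy).charpoly ∧
    ∃ S : Matrix (Fin k) (Fin k) ℝ, IsUnit S.det ∧
      Matrix.reindex (finCongr h) (finCongr h) (cocKS m k cco) =
        S * cycKS m k ccy * S⁻¹ := by
  subst h
  set A : Matrix (Fin m) (Fin m) ℝ := supMat m m cco with hAdef
  have hA : ∀ μ α, A μ α = cco μ (Sum.inr α) := by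
    intro μ α
    simp [hAdef, supMat, eCh, dotProduct_single]
  have hco' : ∀ μ μ' : Fin m, cco μ' (Sum.inl μ) = if μ = μ' then 1 else 0 := by
    intro μ μ'
    have := hco μ μ'
    simpa [eCo, single_dotProduct] using this
  have hch' : ∀ α β : Fin m, ccy α (Sum.inr β) = if β = α then 1 else 0 := by
    intro α β
    have := hch β α
    simpa [eCh, single_dotProduct] using this
  have hccy : ∀ (α μ : Fin m), ccy α (Sum.inl μ) = - A μ α := by
    intro α μ
    have h0 := hcc α μ
    rw [dotProduct] at h0
    rw [Fintype.sum_sum_type] at h0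
    have h1 : ∑ ν, ccy α (Sum.inl ν) * cco μ (Sum.inl ν) = ccy α (Sum.inl μ) := by
      simp [hco']
    have h2 : ∑ β, ccy α (Sum.inr β) * cco μ (Sum.inr β) = A μ α := by
      simp [hch', hA]
    rw [h1, h2] at h0
    linarith
  have hcoc : cocKS m m cco = 1 + A * Aᵀ := by
    ext μ μ'
    simp only [cocKS, Matrix.of_apply, dotProduct, Fintype.sum_sum_type,
      Matrix.add_apply, Matrix.one_apply, Matrix.mul_apply, Matrix.transpose_apply]
    have h1 : ∑ ν, cco μ (Sum.inl ν) * cco μ' (Sum.inl ν) = if μ = μ' then 1 else 0 := by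
      simp [hco']
      exact if_congr eq_comm rfl rfl
    have h2 : ∑ β, cco μ (Sum.inr β) * cco μ' (Sum.inr β) = ∑ β, A μ β * A μ' β := by
      simp [hA]
    rw [h1, h2]
  have hcyc : cycKS m m ccy = 1 + Aᵀ * A := by
    ext α α'
    simp only [cycKS, Matrix.of_apply, dotProduct, Fintype.sum_sum_type,
      Matrix.add_apply, Matrix.one_apply, Matrix.mul_apply, Matrix.transpose_apply]
    have h1 : ∑ ν, ccy α (Sum.inl ν) * ccy α' (Sum.inl ν) = ∑ ν, A ν α * A ν α' := by
      simp [hccy]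
    have h2 : ∑ β, ccy α (Sum.inr β) * ccy α' (Sum.inr β) = if α = α' then 1 else 0 := by
      simp [hch']
      split <;> rename_i hd
      · rw [if_pos hd.symm]
      · rw [if_neg (fun hc => hd hc.symm)]
    rw [h1, h2, add_comm]
  have hchareq : (cocKS m m cco).charpoly = (cycKS m m ccy).charpoly := by
    rw [hcoc, hcyc]
    exact charpoly_one_add_mul_comm A Aᵀ
  refine ⟨hchareq, ?_⟩
  have hH1 : (cocKS m m cco).IsHermitian := by
    ext i j
    simp [cocKS, Matrix.conjTranspose_apply, dotProduct_comm]
  have hH2 : (cycKS m m ccy).IsHermitian := by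
    ext i j
    simp [cycKS, Matrix.conjTranspose_apply, dotProduct_comm]
  obtain ⟨S, hS, hsim⟩ :=
    similar_of_isHermitian_of_charpoly_eq (cocKS m m cco) (cycKS m m ccy) hH1 hH2 hchareq
  exact ⟨S, hS, by rw [finCongr_refl, Matrix.reindex_refl_refl]; exact hsim⟩
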